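/- Let n be a natural number, let A be an n×n complex Hermitian matrix, and let λ : ℕ → ℝ be a sequence with ∑_k |λ_k| < ∞. Then the family k ↦ (det(1 - i·λ_k·A))⁻¹ is multipliable, and ∏_{k=0}^∞ exp(-i·λ_k·tr A)·(det(1 - i·λ_k·A))⁻¹ = exp(-i·(∑_k λ_k)·tr A) · ∏_{k=0}^∞ (det(1 - i·λ_k·A))⁻¹. -/

import Mathlib

open Matrix

section Aux

lemma aux_prod_one_le {ι : Type*} [DecidableEq ι] (s : Finset ι) (a : ι → ℝ)
    (ha : ∀ j, 0 ≤ a j) : 1 ≤ ∏ j ∈ s, (1 + a j) := by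
  calc (1:ℝ) = ∏ _j ∈ s, 1 := by simp
  _ ≤ _ := Finset.prod_le_prod (by intros; norm_num) (by intro j _; linarith [ha j])

lemma aux_norm_prod_sub_one {ι : Type*} [DecidableEq ι] (s : Finset ι) (x : ι → ℂ) :
    ‖∏ j ∈ s, (1 + x j) - 1‖ ≤ ∏ j ∈ s, (1 + ‖x j‖) - 1 := by
  induction s using Finset.induction_on with
  | empty => simp
  | insert _ _ hj ih =>
    rename_i a s
    rw [Finset.prod_insert hj, Finset.prod_insert hj]
    have h1 : (1 + x a) * ∏ j ∈ s, (1 + x j) - 1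
        = (∏ j ∈ s, (1 + x j) - 1) + x a * ∏ j ∈ s, (1 + x j) := by ring
    have hP : ‖∏ j ∈ s, (1 + x j)‖ ≤ ∏ j ∈ s, (1 + ‖x j‖) := by
      calc ‖∏ j ∈ s, (1 + x j)‖ = ‖(∏ j ∈ s, (1 + x j) - 1) + 1‖ := by ring_nf
      _ ≤ ‖∏ j ∈ s, (1 + x j) - 1‖ + ‖(1:ℂ)‖ := norm_add_le _ _
      _ ≤ (∏ j ∈ s, (1 + ‖x j‖) - 1) + 1 := by rw [norm_one]; gcongr
      _ = _ := by ring
    calc ‖(1 + x a) * ∏ j ∈ s, (1 + x j) - 1‖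
        ≤ ‖∏ j ∈ s, (1 + x j) - 1‖ + ‖x a‖ * ‖∏ j ∈ s, (1 + x j)‖ := by
          rw [h1]; exact (norm_add_le _ _).trans (by rw [norm_mul])
      _ ≤ (∏ j ∈ s, (1 + ‖x j‖) - 1) + ‖x a‖ * ∏ j ∈ s, (1 + ‖x j‖) := by
          gcongr
      _ = (1 + ‖x a‖) * ∏ j ∈ s, (1 + ‖x j‖) - 1 := by ring

lemma aux_prod_linear {ι : Type*} [DecidableEq ι] (s : Finset ι) (a : ι → ℝ)
    (ha : ∀ j, 0 ≤ a j) (t : ℝ) (ht0 : 0 ≤ t) (ht1 : t ≤ 1) :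
    ∏ j ∈ s, (1 + t * a j) - 1 ≤ t * (∏ j ∈ s, (1 + a j) - 1) := by
  induction s using Finset.induction_on with
  | empty => simp
  | insert _ _ hj ih =>
    rename_i c s
    rw [Finset.prod_insert hj, Finset.prod_insert hj]
    have hPQ : ∏ j ∈ s, (1 + t * a j) ≤ ∏ j ∈ s, (1 + a j) := by
      apply Finset.prod_le_prod
      · intro j _; nlinarith [ha j]
      · intro j _; nlinarith [ha j]
    have h1 : 1 ≤ ∏ j ∈ s, (1 + a j) := aux_prod_one_le s a ha
    have h0 : 0 ≤ ∏ j ∈ s, (1 + t * a j) := by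
      apply Finset.prod_nonneg; intro j _; nlinarith [ha j]
    nlinarith [ha c, mul_le_mul_of_nonneg_left hPQ (mul_nonneg ht0 (ha c))]

lemma aux_det_one_sub_smul (n : ℕ) (A : Matrix (Fin n) (Fin n) ℂ) (hA : A.IsHermitian) (c : ℂ) :
    (1 - c • A).det = ∏ j, (1 - c * (hA.eigenvalues j : ℂ)) := by
  set U : Matrix (Fin n) (Fin n) ℂ := (hA.eigenvectorUnitary : Matrix (Fin n) (Fin n) ℂ)
  have hU : U * star U = 1 := (Matrix.mem_unitaryGroup_iff).mp hA.eigenvectorUnitary.2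
  have hU' : star U * U = 1 := (Matrix.mem_unitaryGroup_iff').mp hA.eigenvectorUnitary.2
  have key : 1 - c • A = U * (1 - c • Matrix.diagonal (RCLike.ofReal ∘ hA.eigenvalues)) * star U := by
    rw [mul_sub, sub_mul, mul_one, hU]
    congr 1
    rw [mul_smul_comm, smul_mul_assoc]
    congr 1
    exact hA.spectral_theorem
  have hdiag : (1 : Matrix (Fin n) (Fin n) ℂ) - c • Matrix.diagonal (RCLike.ofReal ∘ hA.eigenvalues)
      = Matrix.diagonal (fun j => 1 - c * (hA.eigenvalues j : ℂ)) := by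
    ext i j
    rcases eq_or_ne i j with rfl | h
    · simp [Matrix.one_apply, Matrix.diagonal_apply]
    · simp [Matrix.one_apply_ne h, Matrix.diagonal_apply_ne _ h, h]
  rw [key, det_mul, det_mul, mul_comm, ← mul_assoc, ← det_mul, hU', det_one, one_mul,
    hdiag, det_diagonal]

lemma aux_factor_norm (r m : ℝ) : 1 ≤ ‖(1 : ℂ) - (Complex.I * r) * m‖ := by
  have h := Complex.abs_re_le_norm ((1 : ℂ) - (Complex.I * r) * m)
  simp only [Complex.sub_re, Complex.one_re] at h
  calc (1:ℝ) = |1 - (Complex.I * r * m).re| := by simp [Complex.mul_re, Complex.mul_im]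
  _ ≤ _ := h

end Aux

/-- If `A` is Hermitian and `∑ |λ_k| < ∞`, then `k ↦ det(1 - i·λ_k·A)⁻¹` is
multipliable, and the infinite product with the exponential regularizing factors
can be rewritten by pulling out `exp(-i·(∑ λ_k)·tr A)`. -/
theorem tprod_char_factors_of_summable_abs (n : ℕ) (A : Matrix (Fin n) (Fin n) ℂ)
    (hA : A.IsHermitian) (lam : ℕ → ℝ) (hlam : Summable (fun k => |lam k|)) :
    Multipliable (fun k : ℕ => ((1 - (Complex.I * (lam k : ℂ)) • A).det)⁻¹) ∧
      (∏' k : ℕ, Complex.exp (-Complex.I * (lam k : ℂ) * A.trace) *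
          ((1 - (Complex.I * (lam k : ℂ)) • A).det)⁻¹)
        = Complex.exp (-Complex.I * ((∑' k : ℕ, lam k : ℝ) : ℂ) * A.trace) *
            ∏' k : ℕ, ((1 - (Complex.I * (lam k : ℂ)) • A).det)⁻¹ := by
  set μ : Fin n → ℝ := hA.eigenvalues with hμ
  set d : ℕ → ℂ := fun k => (1 - (Complex.I * (lam k : ℂ)) • A).det with hd
  set f : ℕ → ℂ := fun k => (d k)⁻¹ with hf
  have hdet : ∀ k, d k = ∏ j, (1 - (Complex.I * (lam k : ℂ)) * (μ j : ℂ)) := fun k =>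
    aux_det_one_sub_smul n A hA _
  have hdnorm : ∀ k, 1 ≤ ‖d k‖ := by
    intro k
    rw [hdet k, norm_prod]
    calc (1:ℝ) = ∏ _j : Fin n, 1 := by simp
    _ ≤ _ := Finset.prod_le_prod (by intros; norm_num)
        (fun j _ => by simpa using aux_factor_norm (lam k) (μ j))
  have hdne : ∀ k, d k ≠ 0 := fun k h => by
    have := hdnorm k; rw [h, norm_zero] at this; linarith
  have hfne : ∀ k, f k ≠ 0 := fun k => inv_ne_zero (hdne k)
  -- constant C
  set C : ℝ := ∏ j : Fin n, (1 + |μ j|) - 1 with hC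
  have hC0 : 0 ≤ C := by
    have := aux_prod_one_le Finset.univ (fun j : Fin n => |μ j|) (fun j => abs_nonneg _)
    simp only [hC]; linarith
  -- bound on ‖f k - 1‖
  have hbound : ∀ k, |lam k| ≤ 1 → ‖f k - 1‖ ≤ C * |lam k| := by
    intro k hk1
    have hfd : f k - 1 = (1 - d k) * (d k)⁻¹ := by
      show (d k)⁻¹ - 1 = (1 - d k) * (d k)⁻¹
      rw [sub_mul, one_mul, mul_inv_cancel₀ (hdne k)]
    have h1 : ‖f k - 1‖ ≤ ‖d k - 1‖ := by
      rw [hfd, norm_mul, norm_inv, norm_sub_rev]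
      calc ‖d k - 1‖ * ‖d k‖⁻¹ ≤ ‖d k - 1‖ * 1 := by
            gcongr
            exact inv_le_one_of_one_le₀ (hdnorm k)
      _ = ‖d k - 1‖ := mul_one _
    have h2 : ‖d k - 1‖ ≤ ∏ j : Fin n, (1 + |lam k| * |μ j|) - 1 := by
      have hx : ∀ j : Fin n, (1 : ℂ) - (Complex.I * (lam k : ℂ)) * (μ j : ℂ)
          = 1 + (-(Complex.I * (lam k : ℂ) * (μ j : ℂ))) := by intro j; ring
      have := aux_norm_prod_sub_one Finset.univ
        (fun j : Fin n => -(Complex.I * (lam k : ℂ) * (μ j : ℂ)))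
      have hprod_eq : ∏ j : Fin n, ((1:ℂ) - (Complex.I * (lam k : ℂ)) * (μ j : ℂ))
          = ∏ j : Fin n, (1 + (-(Complex.I * (lam k : ℂ) * (μ j : ℂ)))) :=
        Finset.prod_congr rfl (fun j _ => hx j)
      calc ‖d k - 1‖ = ‖∏ j : Fin n, (1 + (-(Complex.I * (lam k : ℂ) * (μ j : ℂ)))) - 1‖ := by
            rw [hdet k, hprod_eq]
      _ ≤ ∏ j : Fin n, (1 + ‖-(Complex.I * (lam k : ℂ) * (μ j : ℂ))‖) - 1 := this
      _ = ∏ j : Fin n, (1 + |lam k| * |μ j|) - 1 := by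
            congr 1
            refine Finset.prod_congr rfl (fun j _ => ?_)
            rw [norm_neg, norm_mul, norm_mul, Complex.norm_I, one_mul,
              Complex.norm_real, Complex.norm_real, Real.norm_eq_abs, Real.norm_eq_abs]
    have h3 : ∏ j : Fin n, (1 + |lam k| * |μ j|) - 1 ≤ |lam k| * C := by
      have := aux_prod_linear Finset.univ (fun j : Fin n => |μ j|) (fun j => abs_nonneg _)
        |lam k| (abs_nonneg _) hk1
      simpa [hC, mul_comm] using this
    calc ‖f k - 1‖ ≤ |lam k| * C := le_trans h1 (le_trans h2 h3)
    _ = C * |lam k| := mul_comm _ _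
  -- summability of logs
  have hlog_sum : Summable (fun k => Complex.log (f k)) := by
    apply Summable.of_norm_bounded_eventually (g := fun k => 3/2 * C * |lam k|)
      (by simpa [mul_assoc] using (hlam.mul_left (3/2 * C)))
    have htend : Filter.Tendsto lam Filter.cofinite (nhds 0) :=
      (summable_abs_iff.mp hlam).tendsto_cofinite_zero
    have hev : ∀ᶠ k in Filter.cofinite, |lam k| < min 1 (1/(2*(C+1))) := by
      have hpos : (0:ℝ) < min 1 (1/(2*(C+1))) := by
        apply lt_min one_pos
        positivity
      have := Metric.tendsto_nhds.mp htend _ hpos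
      filter_upwards [this] with k hk
      simpa [Real.dist_eq] using hk
    filter_upwards [hev] with k hk
    have hk1 : |lam k| ≤ 1 := le_of_lt (lt_of_lt_of_le hk (min_le_left _ _))
    have hfk : ‖f k - 1‖ ≤ 1/2 := by
      have h1 := hbound k hk1
      have h2 : |lam k| ≤ 1/(2*(C+1)) := le_of_lt (lt_of_lt_of_le hk (min_le_right _ _))
      have h3 : C * |lam k| ≤ C * (1/(2*(C+1))) := by gcongr
      have h4 : C * (1/(2*(C+1))) ≤ 1/2 := by
        rw [mul_one_div, div_le_div_iff₀ (by positivity) (by norm_num : (0:ℝ) < 2)]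
        linarith
      exact le_trans h1 (le_trans h3 h4)
    have hlogk : Complex.log (f k) = Complex.log (1 + (f k - 1)) := by ring_nf
    rw [hlogk]
    calc ‖Complex.log (1 + (f k - 1))‖ ≤ 3/2 * ‖f k - 1‖ :=
          Complex.norm_log_one_add_half_le_self hfk
    _ ≤ 3/2 * (C * |lam k|) := by gcongr; exact hbound k hk1
    _ = 3/2 * C * |lam k| := by ring
  have hmult : Multipliable f := by
    have heq : (fun k => Complex.exp (Complex.log (f k))) = f :=
      funext fun k => Complex.exp_log (hfne k)
    have hp : HasProd (fun k => Complex.exp (Complex.log (f k)))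
        (Complex.exp (∑' k, Complex.log (f k))) := hlog_sum.hasSum.cexp
    rw [heq] at hp
    exact hp.multipliable
  refine ⟨hmult, ?_⟩
  -- part 2
  have hsum : Summable lam := summable_abs_iff.mp hlam
  have hS : HasSum (fun k => -Complex.I * (lam k : ℂ) * A.trace)
      (-Complex.I * ((∑' k : ℕ, lam k : ℝ) : ℂ) * A.trace) :=
    ((Complex.hasSum_ofReal.mpr hsum.hasSum).mul_left (-Complex.I)).mul_right A.trace
  have hexp : HasProd (fun k => Complex.exp (-Complex.I * (lam k : ℂ) * A.trace))
      (Complex.exp (-Complex.I * ((∑' k : ℕ, lam k : ℝ) : ℂ) * A.trace)) := hS.cexp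
  rw [Multipliable.tprod_mul hexp.multipliable hmult, hexp.tprod_eq]
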